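/- Let A ∈ ℝ^{m×n}, x* ∈ ℝⁿ, y = A x*, T ⊆ {1,...,n}. Suppose the only δ ∈ ℝⁿ with Aδ = 0 and δ_{Tᶜ} = 0 is δ = 0 on T as well (i.e., A restricted to columns in T is injective), and suppose that for every nonzero δ in the null space of A with δ_{Tᶜ} ≠ 0, the normalized vector δ/‖δ‖₁ fails at least one of the sign-pattern/positivity conditions of Theorem 1 or satisfies ∑_{k ∈ Tᶜ\I} |δ_k| > ∑_{k ∈ I} |δ_k| for its associated I = {k ∈ Δ : sign(x*_k) = sign(δ_k)}. Then every solution x† of Ax = y with ‖x†_{Tᶜ}‖₁ = ‖x*_{Tᶜ}‖₁ and x† ≠ x* leads to a contradiction; hence x* is the unique minimizer of the modified-CS program. -/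

import Mathlib

private lemma sign_eq_pos_mul {a b : ℝ} (ha : a ≠ 0) (h : Real.sign a = Real.sign b) :
    0 < a * b := by
  rcases ha.lt_or_gt with h1 | h1
  · rw [Real.sign_of_neg h1] at h
    rcases lt_trichotomy b 0 with h2 | h2 | h2
    · exact mul_pos_of_neg_of_neg h1 h2
    · rw [h2, Real.sign_zero] at h; norm_num at h
    · rw [Real.sign_of_pos h2] at h; norm_num at h
  · rw [Real.sign_of_pos h1] at h
    rcases lt_trichotomy b 0 with h2 | h2 | h2
    · rw [Real.sign_of_neg h2] at h; norm_num at h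
    · rw [h2, Real.sign_zero] at h; norm_num at h
    · exact mul_pos h1 h2

private lemma sign_ne_mul_nonpos {a b : ℝ} (h : Real.sign a ≠ Real.sign b) : a * b ≤ 0 := by
  by_contra hc
  push_neg at hc
  rcases mul_pos_iff.mp hc with ⟨h1, h2⟩ | ⟨h1, h2⟩
  · exact h (by rw [Real.sign_of_pos h1, Real.sign_of_pos h2])
  · exact h (by rw [Real.sign_of_neg h1, Real.sign_of_neg h2])

private lemma sign_div_pos {b s : ℝ} (hs : 0 < s) : Real.sign (b / s) = Real.sign b := by
  rcases lt_trichotomy b 0 with h | h | h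
  · rw [Real.sign_of_neg h, Real.sign_of_neg (div_neg_of_neg_of_pos h hs)]
  · simp [h]
  · rw [Real.sign_of_pos h, Real.sign_of_pos (div_pos h hs)]

private lemma abs_add_of_nonneg_mul {a b : ℝ} (h : 0 ≤ a * b) : |a + b| = |a| + |b| := by
  rcases mul_nonneg_iff.mp h with ⟨h1, h2⟩ | ⟨h1, h2⟩
  · rw [abs_of_nonneg h1, abs_of_nonneg h2, abs_of_nonneg (by linarith)]
  · rw [abs_of_nonpos h1, abs_of_nonpos h2, abs_of_nonpos (by linarith)]; ring

/-- uniqueness of the modified-CS minimizer from the strict-increase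
condition along normalized null-space directions. -/
theorem stmt_12 {m n : ℕ} (A : Matrix (Fin m) (Fin n) ℝ) (xstar : Fin n → ℝ)
    (T : Finset (Fin n))
    (hinj : ∀ δ : Fin n → ℝ, A.mulVec δ = 0 → (∀ k ∈ Tᶜ, δ k = 0) → δ = 0)
    (hcond : ∀ δ : Fin n → ℝ, A.mulVec δ = 0 → δ ≠ 0 → (∃ k ∈ Tᶜ, δ k ≠ 0) →
      ∀ η : Fin n → ℝ, η = (fun k => δ k / ∑ j, |δ j|) →
      ∀ I : Finset (Fin n),
        (∀ k, k ∈ I ↔ (xstar k ≠ 0 ∧ k ∉ T ∧ Real.sign (xstar k) = Real.sign (η k))) →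
        (¬ ((∑ j, |η j|) = 1 ∧ (∀ k ∈ I, η k * xstar k > 0) ∧
              (∀ k, xstar k ≠ 0 → k ∉ T → k ∉ I → η k * xstar k ≤ 0))
          ∨ ∑ k ∈ I, |η k| < ∑ k ∈ Tᶜ \ I, |η k|)) :
    (∀ xdag : Fin n → ℝ, A.mulVec xdag = A.mulVec xstar → xdag ≠ xstar →
        ∑ k ∈ Tᶜ, |xdag k| = ∑ k ∈ Tᶜ, |xstar k| → False) ∧
    (∀ xdag : Fin n → ℝ, A.mulVec xdag = A.mulVec xstar → xdag ≠ xstar →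
        ∑ k ∈ Tᶜ, |xstar k| < ∑ k ∈ Tᶜ, |xdag k|) := by
  have key : ∀ xdag : Fin n → ℝ, A.mulVec xdag = A.mulVec xstar → xdag ≠ xstar →
      ∑ k ∈ Tᶜ, |xstar k| < ∑ k ∈ Tᶜ, |xdag k| := by
    intro xdag hA hne
    -- the null-space direction δ = xstar - xdag
    set δ : Fin n → ℝ := fun k => xstar k - xdag k with hδdef
    have hδ0 : A.mulVec δ = 0 := by
      have h1 : δ = xstar - xdag := rfl
      rw [h1, Matrix.mulVec_sub, hA, sub_self]
    have hδne : δ ≠ 0 := by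
      intro h
      apply hne
      funext k
      have := congrFun h k
      simp only [hδdef, Pi.zero_apply] at this
      linarith
    have hTc : ∃ k ∈ Tᶜ, δ k ≠ 0 := by
      by_contra h
      push_neg at h
      exact hδne (hinj δ hδ0 h)
    have hspos : 0 < ∑ j, |δ j| := by
      obtain ⟨k, hk⟩ : ∃ k, δ k ≠ 0 := by
        by_contra h; push_neg at h; exact hδne (funext h)
      have h1 : |δ k| ≤ ∑ j, |δ j| :=
        Finset.single_le_sum (fun j _ => abs_nonneg (δ j)) (Finset.mem_univ k)
      have h2 : 0 < |δ k| := abs_pos.mpr hk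
      linarith
    set s : ℝ := ∑ j, |δ j| with hs
    set η : Fin n → ℝ := fun k => δ k / s with hη
    have hsignη : ∀ k, Real.sign (η k) = Real.sign (δ k) := fun k => sign_div_pos hspos
    set I : Finset (Fin n) := Finset.univ.filter
      (fun k => xstar k ≠ 0 ∧ k ∉ T ∧ Real.sign (xstar k) = Real.sign (η k)) with hI
    have hImem : ∀ k, k ∈ I ↔
        (xstar k ≠ 0 ∧ k ∉ T ∧ Real.sign (xstar k) = Real.sign (η k)) := by
      intro k; simp [hI]
    have habsη : ∀ k, |η k| = |δ k| / s := by
      intro k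
      rw [hη]
      simp only
      rw [abs_div, abs_of_pos hspos]
    have hsum1 : (∑ j, |η j|) = 1 := by
      have : (∑ j, |η j|) = (∑ j, |δ j|) / s := by
        rw [Finset.sum_div]
        exact Finset.sum_congr rfl fun k _ => habsη k
      rw [this, ← hs, div_self (ne_of_gt hspos)]
    have hdisj := hcond δ hδ0 hδne hTc η rfl I hImem
    have hlt : ∑ k ∈ I, |η k| < ∑ k ∈ Tᶜ \ I, |η k| := by
      rcases hdisj with hneg | hlt
      · exfalso
        apply hneg
        refine ⟨hsum1, ?_, ?_⟩
        · intro k hk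
          obtain ⟨hx, _, hsgn⟩ := (hImem k).mp hk
          have := sign_eq_pos_mul hx hsgn
          linarith [this]
        · intro k hx hT hkI
          have : Real.sign (xstar k) ≠ Real.sign (η k) := by
            intro hc
            exact hkI ((hImem k).mpr ⟨hx, hT, hc⟩)
          have h2 := sign_ne_mul_nonpos this
          linarith [h2]
      · exact hlt
    have hltδ : ∑ k ∈ I, |δ k| < ∑ k ∈ Tᶜ \ I, |δ k| := by
      have h1 : ∑ k ∈ I, |η k| = (∑ k ∈ I, |δ k|) / s := by
        rw [Finset.sum_div]; exact Finset.sum_congr rfl fun k _ => habsη k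
      have h2 : ∑ k ∈ Tᶜ \ I, |η k| = (∑ k ∈ Tᶜ \ I, |δ k|) / s := by
        rw [Finset.sum_div]; exact Finset.sum_congr rfl fun k _ => habsη k
      rw [h1, h2] at hlt
      exact (div_lt_div_iff_of_pos_right hspos).mp hlt
    -- I ⊆ Tᶜ
    have hIsub : I ⊆ Tᶜ := by
      intro k hk
      obtain ⟨_, hT, _⟩ := (hImem k).mp hk
      exact Finset.mem_compl.mpr hT
    -- pointwise bounds
    have hb1 : ∀ k ∈ Tᶜ \ I, |xstar k| + |δ k| ≤ |xdag k| := by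
      intro k hk
      have hkT : k ∉ T := Finset.mem_compl.mp (Finset.mem_sdiff.mp hk).1
      have hkI : k ∉ I := (Finset.mem_sdiff.mp hk).2
      have hprod : xstar k * δ k ≤ 0 := by
        by_cases hx : xstar k = 0
        · rw [hx]; simp
        · have hsgn : Real.sign (xstar k) ≠ Real.sign (δ k) := by
            intro hc
            exact hkI ((hImem k).mpr ⟨hx, hkT, by rw [hsignη k]; exact hc⟩)
          exact sign_ne_mul_nonpos hsgn
      have hxdag : xdag k = xstar k + (-δ k) := by
        simp only [hδdef]; ring
      rw [hxdag, abs_add_of_nonneg_mul (by nlinarith), abs_neg]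
    have hb2 : ∀ k ∈ I, |xstar k| - |δ k| ≤ |xdag k| := by
      intro k _
      have hxs : xstar k = xdag k + δ k := by simp only [hδdef]; ring
      calc |xstar k| - |δ k| = |xdag k + δ k| - |δ k| := by rw [← hxs]
        _ ≤ (|xdag k| + |δ k|) - |δ k| := by linarith [abs_add_le (xdag k) (δ k)]
        _ = |xdag k| := by ring
    have hsplit1 : ∑ k ∈ Tᶜ \ I, |xdag k| + ∑ k ∈ I, |xdag k| = ∑ k ∈ Tᶜ, |xdag k| :=
      Finset.sum_sdiff hIsub
    have hsplit2 : ∑ k ∈ Tᶜ \ I, |xstar k| + ∑ k ∈ I, |xstar k| = ∑ k ∈ Tᶜ, |xstar k| :=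
      Finset.sum_sdiff hIsub
    have hS1 : ∑ k ∈ Tᶜ \ I, (|xstar k| + |δ k|) ≤ ∑ k ∈ Tᶜ \ I, |xdag k| :=
      Finset.sum_le_sum hb1
    have hS2 : ∑ k ∈ I, (|xstar k| - |δ k|) ≤ ∑ k ∈ I, |xdag k| :=
      Finset.sum_le_sum hb2
    rw [Finset.sum_add_distrib] at hS1
    rw [Finset.sum_sub_distrib] at hS2
    linarith
  exact ⟨fun xdag h1 h2 h3 => by have := key xdag h1 h2; linarith, key⟩
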